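/- Let n and d be positive integers with n ≥ 2d + 2, and let B_{n,d} be the tree with n vertices obtained from the star K_{1,n−d−1} by attaching d new pendant vertices to one of the leaves of the star; let T(n,4) (for n ≥ 5) be the tree with n vertices obtained from the path v_1, …, v_5 by attaching n − 5 new pendant vertices to v_3. Then χ(B_{n,d}) = n − 2 + 2^d + 2^{n−d−2} + 2^{n−2}, and χ(T(n,4)) = n + 1 + 2^{n−2} + 2^{n−5}. -/

import Mathlib

open SimpleGraph

/-- `S` is the vertex set of a subtree of `G`: a nonempty set of vertices
whose induced subgraph is connected. -/
def SimpleGraph.IsSubtree {V : Type*} (G : SimpleGraph V) (S : Finset V) : Prop :=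
  S.Nonempty ∧ (G.induce (S : Set V)).Connected

/-- `χ(G)`: the number of subtrees of `G`. -/
noncomputable def SimpleGraph.subtreeCount {V : Type*} (G : SimpleGraph V) : ℕ :=
  Nat.card {S : Finset V // G.IsSubtree S}

/-- The star with center `c`: `c` is adjacent to every other vertex, and there are
no other edges. -/
def starGraph {V : Type*} (c : V) : SimpleGraph V :=
  SimpleGraph.fromRel (fun a _ => a = c)

/-- The graph obtained from `G` by attaching `r` new pendant vertices to the vertex `u`. -/
def addPendants {V : Type*} (G : SimpleGraph V) (u : V) (r : ℕ) :
    SimpleGraph (V ⊕ Fin r) where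
  Adj a b :=
    match a, b with
    | Sum.inl a, Sum.inl b => G.Adj a b
    | Sum.inl a, Sum.inr _ => a = u
    | Sum.inr _, Sum.inl b => b = u
    | Sum.inr _, Sum.inr _ => False
  symm := ⟨by
    rintro (a | a) (b | b) h
    · exact h.symm
    · exact h
    · exact h
    · exact h⟩
  loopless := ⟨by
    rintro (a | a) h
    · exact G.loopless.irrefl a h
    · exact h⟩

section Helpers

variable {V : Type*}

lemma induce_connected_singleton (G : SimpleGraph V) (v : V) :
    (G.induce ({v} : Set V)).Connected := by
  rw [connected_iff]
  refine ⟨fun a b => ?_, ⟨⟨v, rfl⟩⟩⟩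
  have : a = b := Subtype.ext (by
    have ha := a.2; have hb := b.2
    simp only [Set.mem_singleton_iff] at ha hb
    rw [ha, hb])
  exact this ▸ Reachable.refl _

lemma isSubtree_singleton (G : SimpleGraph V) (v : V) : G.IsSubtree {v} := by
  refine ⟨⟨v, Finset.mem_singleton_self v⟩, ?_⟩
  rw [Finset.coe_singleton]
  exact induce_connected_singleton G v

lemma induce_connected_of_hub (G : SimpleGraph V) (S : Set V) (h : V) (hh : h ∈ S)
    (hadj : ∀ x ∈ S, x = h ∨ G.Adj x h) : (G.induce S).Connected := by
  rw [connected_iff]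
  refine ⟨fun a b => ?_, ⟨⟨h, hh⟩⟩⟩
  have key : ∀ x : S, (G.induce S).Reachable x ⟨h, hh⟩ := by
    intro x
    rcases hadj x.1 x.2 with he | ha
    · have : x = (⟨h, hh⟩ : S) := Subtype.ext he
      exact this ▸ Reachable.refl _
    · exact Adj.reachable (by simpa using ha)
  exact (key a).trans (key b).symm

lemma exists_adj_of_mem {G : SimpleGraph V} {S : Finset V}
    (hc : (G.induce (S : Set V)).Connected) {x y : V} (hx : x ∈ S) (hy : y ∈ S)
    (hxy : x ≠ y) : ∃ z ∈ S, G.Adj x z := by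
  obtain ⟨w⟩ := hc.preconnected ⟨x, Finset.mem_coe.mpr hx⟩ ⟨y, Finset.mem_coe.mpr hy⟩
  cases w with
  | nil => exact absurd rfl hxy
  | cons h p =>
    rename_i z
    exact ⟨z.1, Finset.mem_coe.mp z.2, by simpa using h⟩

lemma reachable_induce_map {W : Type*} (G : SimpleGraph V) (H : SimpleGraph W)
    (S : Set V) (T : Set W) (f : V → W) (hmem : ∀ x ∈ S, f x ∈ T)
    (hadj : ∀ x y : V, x ∈ S → y ∈ S → G.Adj x y → f x = f y ∨ H.Adj (f x) (f y)) :
    ∀ x y : S, (G.induce S).Reachable x y →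
      (H.induce T).Reachable ⟨f x, hmem x x.2⟩ ⟨f y, hmem y y.2⟩ := by
  intro x y hr
  obtain ⟨w⟩ := hr
  induction w with
  | nil => exact Reachable.refl _
  | @cons a b c h p ih =>
    rcases hadj a b a.2 b.2 (by simpa using h) with he | ha
    · have : (⟨f a, hmem a a.2⟩ : T) = ⟨f b, hmem b b.2⟩ := Subtype.ext he
      exact this ▸ ih
    · exact (Adj.reachable
        (by simpa using ha : (H.induce T).Adj ⟨f a, hmem a a.2⟩ ⟨f b, hmem b b.2⟩)).trans ih

end Helpers

section Counting

variable {V : Type*} [Fintype V] [DecidableEq V]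

/-- Number of finsets containing `P` and disjoint from `Q`. -/
lemma card_finset_subset_avoid (P Q : Finset V) (hPQ : Disjoint P Q) :
    Nat.card {S : Finset V // P ⊆ S ∧ ∀ x ∈ Q, x ∉ S} =
      2 ^ (Fintype.card V - P.card - Q.card) := by
  classical
  have hmap : ∀ (T : Finset {x : V // x ∉ P ∧ x ∉ Q}) (x : V),
      x ∈ T.map (Function.Embedding.subtype _) → x ∉ P ∧ x ∉ Q := by
    intro T x hx
    obtain ⟨t, _, rfl⟩ := Finset.mem_map.mp hx
    exact t.2
  have e : {S : Finset V // P ⊆ S ∧ ∀ x ∈ Q, x ∉ S} ≃ Finset {x : V // x ∉ P ∧ x ∉ Q} := by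
    refine ⟨fun S => S.1.subtype _, fun T => ⟨P ∪ T.map (Function.Embedding.subtype _), ?_, ?_⟩,
      ?_, ?_⟩
    · exact Finset.subset_union_left
    · intro x hxQ hx
      rcases Finset.mem_union.mp hx with h | h
      · exact (Finset.disjoint_left.mp hPQ h) hxQ
      · exact (hmap _ _ h).2 hxQ
    · rintro ⟨S, hPS, hQS⟩
      apply Subtype.ext
      have : (S.subtype fun x => x ∉ P ∧ x ∉ Q).map (Function.Embedding.subtype _) =
          S.filter (fun x => x ∉ P ∧ x ∉ Q) := Finset.subtype_map _
      simp only [this]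
      ext x
      simp only [Finset.mem_union, Finset.mem_filter]
      constructor
      · rintro (h | h)
        · exact hPS h
        · exact h.1
      · intro hx
        by_cases hxP : x ∈ P
        · exact Or.inl hxP
        · exact Or.inr ⟨hx, hxP, fun hxQ => hQS x hxQ hx⟩
    · intro T
      apply Finset.map_injective (Function.Embedding.subtype _)
      rw [Finset.subtype_map]
      ext x
      simp only [Finset.mem_filter, Finset.mem_union]
      constructor
      · rintro ⟨h | h, hx⟩
        · exact absurd h hx.1
        · exact h
      · intro hx
        exact ⟨Or.inr hx, hmap _ _ hx⟩
  rw [Nat.card_congr e, Nat.card_eq_fintype_card, Fintype.card_finset]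
  congr 1
  rw [Fintype.card_subtype]
  have : (Finset.univ.filter fun x : V => x ∉ P ∧ x ∉ Q) = Finset.univ \ (P ∪ Q) := by
    ext x; simp [not_or]
  rw [this, Finset.card_sdiff_of_subset (Finset.subset_univ _), Finset.card_univ,
    Finset.card_union_of_disjoint hPQ, Nat.sub_sub]

lemma card_singleton_finsets (c u : V) (hcu : c ≠ u) :
    Nat.card {S : Finset V // ∃ v, v ≠ c ∧ v ≠ u ∧ S = {v}} = Fintype.card V - 2 := by
  classical
  have e : {v : V // v ≠ c ∧ v ≠ u} ≃ {S : Finset V // ∃ v, v ≠ c ∧ v ≠ u ∧ S = {v}} := by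
    refine Equiv.ofBijective (fun v => ⟨{v.1}, v.1, v.2.1, v.2.2, rfl⟩) ⟨?_, ?_⟩
    · intro a b hab
      have := Subtype.ext_iff.mp hab
      exact Subtype.ext (Finset.singleton_injective this)
    · rintro ⟨S, v, hv1, hv2, rfl⟩
      exact ⟨⟨v, hv1, hv2⟩, rfl⟩
  rw [← Nat.card_congr e, Nat.card_eq_fintype_card, Fintype.card_subtype]
  have : (Finset.univ.filter fun v : V => v ≠ c ∧ v ≠ u) = Finset.univ \ {c, u} := by
    ext x; simp [not_or]
  rw [this, Finset.card_sdiff_of_subset (Finset.subset_univ _), Finset.card_univ]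
  congr 1
  rw [Finset.card_insert_of_notMem (by simpa using hcu), Finset.card_singleton]

lemma card_singleton_finsets' (c : V) :
    Nat.card {S : Finset V // ∃ v, v ≠ c ∧ S = {v}} = Fintype.card V - 1 := by
  classical
  have e : {v : V // v ≠ c} ≃ {S : Finset V // ∃ v, v ≠ c ∧ S = {v}} := by
    refine Equiv.ofBijective (fun v => ⟨{v.1}, v.1, v.2, rfl⟩) ⟨?_, ?_⟩
    · intro a b hab
      have := Subtype.ext_iff.mp hab
      exact Subtype.ext (Finset.singleton_injective this)
    · rintro ⟨S, v, hv1, rfl⟩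
      exact ⟨⟨v, hv1⟩, rfl⟩
  rw [← Nat.card_congr e, Nat.card_eq_fintype_card, Fintype.card_subtype_compl,
    Fintype.card_subtype_eq]

end Counting

section Star

set_option linter.unusedSectionVars false

variable {V : Type*} [DecidableEq V]

lemma starGraph_adj (c x y : V) : (_root_.starGraph c).Adj x y ↔ x ≠ y ∧ (x = c ∨ y = c) :=
  SimpleGraph.fromRel_adj _ x y

lemma star_isSubtree_iff (c : V) (S : Finset V) :
    (_root_.starGraph c).IsSubtree S ↔ (∃ v, v ≠ c ∧ S = {v}) ∨ c ∈ S := by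
  constructor
  · rintro ⟨⟨v, hv⟩, hconn⟩
    by_cases hc : c ∈ S
    · exact Or.inr hc
    · refine Or.inl ⟨v, fun h => hc (h ▸ hv), ?_⟩
      ext w
      simp only [Finset.mem_singleton]
      constructor
      · intro hw
        by_contra hwv
        obtain ⟨z, hz, hadj⟩ := exists_adj_of_mem hconn hw hv hwv
        rw [_root_.starGraph_adj] at hadj
        rcases hadj.2 with h | h
        · exact hc (h ▸ hw)
        · exact hc (h ▸ hz)
      · rintro rfl; exact hv
  · rintro (⟨v, _, rfl⟩ | hc)
    · exact isSubtree_singleton _ v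
    · refine ⟨⟨c, hc⟩, induce_connected_of_hub _ _ c (Finset.mem_coe.mpr hc) ?_⟩
      intro x hx
      by_cases hxc : x = c
      · exact Or.inl hxc
      · exact Or.inr ((_root_.starGraph_adj c x c).mpr ⟨hxc, Or.inr rfl⟩)

variable [Fintype V]

lemma star_count_mem (c u : V) (hcu : c ≠ u) :
    Nat.card {S : Finset V // (_root_.starGraph c).IsSubtree S ∧ u ∈ S} =
      1 + 2 ^ (Fintype.card V - 2) := by
  classical
  have hchar : ∀ S : Finset V, ((_root_.starGraph c).IsSubtree S ∧ u ∈ S) ↔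
      (S = {u} ∨ (({c, u} : Finset V) ⊆ S ∧ ∀ x ∈ (∅ : Finset V), x ∉ S)) := by
    intro S
    rw [star_isSubtree_iff]
    constructor
    · rintro ⟨⟨v, hvc, rfl⟩ | hc, hu⟩
      · rw [Finset.mem_singleton] at hu
        exact Or.inl (by rw [hu])
      · refine Or.inr ⟨?_, by simp⟩
        intro x hx
        rcases Finset.mem_insert.mp hx with rfl | hx
        · exact hc
        · rw [Finset.mem_singleton] at hx; exact hx ▸ hu
    · rintro (rfl | ⟨hsub, -⟩)
      · exact ⟨Or.inl ⟨u, fun h => hcu h.symm, rfl⟩, Finset.mem_singleton_self u⟩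
      · have hc := hsub (Finset.mem_insert_self c {u})
        have hu := hsub (Finset.mem_insert_of_mem (Finset.mem_singleton_self u))
        exact ⟨Or.inr hc, hu⟩
  rw [Nat.card_congr (Equiv.subtypeEquivRight hchar)]
  have hdisj : Disjoint (fun S : Finset V => S = {u})
      (fun S : Finset V => ({c, u} : Finset V) ⊆ S ∧ ∀ x ∈ (∅ : Finset V), x ∉ S) := by
    refine Pi.disjoint_iff.mpr fun S => Prop.disjoint_iff.mpr ?_
    rintro ⟨rfl, h2, -⟩
    have := h2 (Finset.mem_insert_self c {u})
    rw [Finset.mem_singleton] at this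
    exact hcu this
  rw [Nat.card_congr (subtypeOrEquiv _ _ hdisj), Nat.card_sum]
  have h1 : Nat.card {S : Finset V // S = {u}} = 1 := by
    rw [Nat.card_eq_fintype_card, Fintype.card_subtype_eq]
  have h2 : Nat.card {S : Finset V //
      ({c, u} : Finset V) ⊆ S ∧ ∀ x ∈ (∅ : Finset V), x ∉ S} = 2 ^ (Fintype.card V - 2) := by
    rw [card_finset_subset_avoid _ _ (Finset.disjoint_empty_right _)]
    have : ({c, u} : Finset V).card = 2 := by
      rw [Finset.card_insert_of_notMem (by simpa using hcu), Finset.card_singleton]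
    rw [this, Finset.card_empty, Nat.sub_zero]
  rw [h1, h2]

lemma star_count_not_mem (c u : V) (hcu : c ≠ u) :
    Nat.card {S : Finset V // (_root_.starGraph c).IsSubtree S ∧ u ∉ S} =
      (Fintype.card V - 2) + 2 ^ (Fintype.card V - 2) := by
  classical
  have hchar : ∀ S : Finset V, ((_root_.starGraph c).IsSubtree S ∧ u ∉ S) ↔
      ((∃ v, v ≠ c ∧ v ≠ u ∧ S = {v}) ∨
        (({c} : Finset V) ⊆ S ∧ ∀ x ∈ ({u} : Finset V), x ∉ S)) := by
    intro S
    rw [star_isSubtree_iff]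
    constructor
    · rintro ⟨⟨v, hvc, rfl⟩ | hc, hu⟩
      · exact Or.inl ⟨v, hvc, fun h => hu (h ▸ Finset.mem_singleton_self v), rfl⟩
      · refine Or.inr ⟨Finset.singleton_subset_iff.mpr hc, ?_⟩
        intro x hx
        rw [Finset.mem_singleton] at hx
        exact hx ▸ hu
    · rintro (⟨v, hvc, hvu, rfl⟩ | ⟨hsub, hav⟩)
      · exact ⟨Or.inl ⟨v, hvc, rfl⟩, fun h => hvu (Finset.mem_singleton.mp h).symm⟩
      · exact ⟨Or.inr (Finset.singleton_subset_iff.mp hsub),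
          hav u (Finset.mem_singleton_self u)⟩
  rw [Nat.card_congr (Equiv.subtypeEquivRight hchar)]
  have hdisj : Disjoint (fun S : Finset V => ∃ v, v ≠ c ∧ v ≠ u ∧ S = {v})
      (fun S : Finset V => ({c} : Finset V) ⊆ S ∧ ∀ x ∈ ({u} : Finset V), x ∉ S) := by
    refine Pi.disjoint_iff.mpr fun S => Prop.disjoint_iff.mpr ?_
    rintro ⟨⟨v, hvc, -, rfl⟩, h2, -⟩
    have := h2 (Finset.mem_singleton_self c)
    rw [Finset.mem_singleton] at this
    exact hvc this.symm
  rw [Nat.card_congr (subtypeOrEquiv _ _ hdisj), Nat.card_sum]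
  have h1 := card_singleton_finsets c u hcu
  have h2 : Nat.card {S : Finset V //
      ({c} : Finset V) ⊆ S ∧ ∀ x ∈ ({u} : Finset V), x ∉ S} = 2 ^ (Fintype.card V - 2) := by
    rw [card_finset_subset_avoid _ _ (Finset.disjoint_singleton.mpr hcu)]
    rw [Finset.card_singleton, Finset.card_singleton, Nat.sub_sub]
  rw [h1, h2]

end Star

section Pendant

variable {V : Type*} [DecidableEq V] (G : SimpleGraph V) (u : V) {r : ℕ}

lemma pendant_proj (B : Finset V) (A : Finset (Fin r))
    (hconn : ((addPendants G u r).induce ((B.disjSum A : Finset (V ⊕ Fin r)) :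
        Set (V ⊕ Fin r))).Connected)
    (hu : A.Nonempty → u ∈ B) (hB : B.Nonempty) : (G.induce (B : Set V)).Connected := by
  rw [connected_iff]
  refine ⟨?_, ⟨⟨hB.choose, hB.choose_spec⟩⟩⟩
  intro x y
  have hmem : ∀ z ∈ ((B.disjSum A : Finset (V ⊕ Fin r)) : Set (V ⊕ Fin r)),
      (Sum.elim id (fun _ => u) z) ∈ (B : Set V) := by
    rintro (v | a) hz
    · simpa using Finset.mem_coe.mp hz
    · exact hu ⟨a, by simpa using Finset.mem_coe.mp hz⟩
  have hadj : ∀ z w : V ⊕ Fin r, z ∈ ((B.disjSum A : Finset (V ⊕ Fin r)) : Set (V ⊕ Fin r)) →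
      w ∈ ((B.disjSum A : Finset (V ⊕ Fin r)) : Set (V ⊕ Fin r)) →
      (addPendants G u r).Adj z w →
      Sum.elim id (fun _ => u) z = Sum.elim id (fun _ => u) w ∨
        G.Adj (Sum.elim id (fun _ => u) z) (Sum.elim id (fun _ => u) w) := by
    rintro (v | a) (v' | a') _ _ h
    · exact Or.inr h
    · exact Or.inl (h : v = u)
    · exact Or.inl (Eq.symm (h : v' = u))
    · exact absurd h id
  have hx : (Sum.inl x.1 : V ⊕ Fin r) ∈
      ((B.disjSum A : Finset (V ⊕ Fin r)) : Set (V ⊕ Fin r)) := by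
    simpa using Finset.mem_coe.mp x.2
  have hy : (Sum.inl y.1 : V ⊕ Fin r) ∈
      ((B.disjSum A : Finset (V ⊕ Fin r)) : Set (V ⊕ Fin r)) := by
    simpa using Finset.mem_coe.mp y.2
  exact reachable_induce_map (addPendants G u r) G _ _ _ hmem hadj ⟨Sum.inl x.1, hx⟩
    ⟨Sum.inl y.1, hy⟩ (hconn.preconnected _ _)

lemma pendant_connected (B : Finset V) (A : Finset (Fin r))
    (hB : G.IsSubtree B) (huB : u ∈ B ∨ A = ∅) :
    (addPendants G u r).IsSubtree (B.disjSum A) := by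
  obtain ⟨hne, hconn⟩ := hB
  obtain ⟨b0, hb0⟩ := hne
  have hb0' : (Sum.inl b0 : V ⊕ Fin r) ∈ B.disjSum A := by simpa using hb0
  refine ⟨⟨Sum.inl b0, hb0'⟩, ?_⟩
  rw [connected_iff]
  refine ⟨?_, ⟨⟨Sum.inl b0, Finset.mem_coe.mpr hb0'⟩⟩⟩
  have key_inl : ∀ v (hv : v ∈ B),
      ((addPendants G u r).induce ((B.disjSum A : Finset (V ⊕ Fin r)) : Set (V ⊕ Fin r))).Reachable
        ⟨Sum.inl v, Finset.mem_coe.mpr (Finset.inl_mem_disjSum.mpr hv)⟩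
        ⟨Sum.inl b0, Finset.mem_coe.mpr hb0'⟩ := by
    intro v hv
    exact reachable_induce_map G (addPendants G u r) (B : Set V) _ Sum.inl
      (fun z hz => by simpa using Finset.mem_coe.mp hz)
      (fun z w _ _ h => Or.inr h) ⟨v, hv⟩ ⟨b0, hb0⟩ (hconn.preconnected _ _)
  have key : ∀ x : ((B.disjSum A : Finset (V ⊕ Fin r)) : Set (V ⊕ Fin r)),
      ((addPendants G u r).induce
        ((B.disjSum A : Finset (V ⊕ Fin r)) : Set (V ⊕ Fin r))).Reachable
        x ⟨Sum.inl b0, Finset.mem_coe.mpr hb0'⟩ := by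
    rintro ⟨(v | a), hx⟩
    · exact key_inl v (by simpa using Finset.mem_coe.mp hx)
    · have ha : a ∈ A := by simpa using Finset.mem_coe.mp hx
      have hu : u ∈ B := huB.resolve_right (fun h => by simp [h] at ha)
      have step : ((addPendants G u r).induce
          ((B.disjSum A : Finset (V ⊕ Fin r)) : Set (V ⊕ Fin r))).Adj
          ⟨Sum.inr a, hx⟩ ⟨Sum.inl u, Finset.mem_coe.mpr (Finset.inl_mem_disjSum.mpr hu)⟩ := by
        show (addPendants G u r).Adj (Sum.inr a) (Sum.inl u)
        exact rfl
      exact (Adj.reachable step).trans (key_inl u hu)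
  exact fun a b => (key a).trans (key b).symm

lemma pendant_char (B : Finset V) (A : Finset (Fin r)) :
    (addPendants G u r).IsSubtree (B.disjSum A) ↔
      ((B = ∅ ∧ ∃ p, A = {p}) ∨ ((G.IsSubtree B ∧ u ∉ B) ∧ A = ∅) ∨
        (G.IsSubtree B ∧ u ∈ B)) := by
  constructor
  · rintro ⟨hne, hconn⟩
    by_cases hA : A = ∅
    · subst hA
      have hBne : B.Nonempty := by
        obtain ⟨x, hx⟩ := hne
        rcases x with v | a
        · exact ⟨v, by simpa using hx⟩
        · simp at hx
      have hBconn := pendant_proj G u B ∅ hconn (by rintro ⟨a, ha⟩; simp at ha) hBne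
      by_cases huB : u ∈ B
      · exact Or.inr (Or.inr ⟨⟨hBne, hBconn⟩, huB⟩)
      · exact Or.inr (Or.inl ⟨⟨⟨hBne, hBconn⟩, huB⟩, rfl⟩)
    · obtain ⟨p, hp⟩ := Finset.nonempty_iff_ne_empty.mpr hA
      by_cases hsing : B = ∅ ∧ A = {p}
      · exact Or.inl ⟨hsing.1, p, hsing.2⟩
      · have hy : ∃ y ∈ B.disjSum A, y ≠ Sum.inr p := by
          by_contra h
          push_neg at h
          refine hsing ⟨?_, ?_⟩
          · ext v
            simp only [Finset.notMem_empty, iff_false]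
            intro hv
            exact absurd (h _ (Finset.inl_mem_disjSum.mpr hv)) (by simp)
          · ext q
            simp only [Finset.mem_singleton]
            constructor
            · intro hq
              have := h _ ((Finset.inr_mem_disjSum).mpr hq)
              exact Sum.inr_injective this
            · rintro rfl; exact hp
        obtain ⟨y, hy, hyp⟩ := hy
        obtain ⟨z, hz, hzadj⟩ :=
          exists_adj_of_mem hconn ((Finset.inr_mem_disjSum).mpr hp) hy hyp.symm
        have hzu : z = Sum.inl u := by
          rcases z with v | a
          · exact congrArg Sum.inl (hzadj : v = u)
          · exact absurd hzadj id
        subst hzu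
        have huB : u ∈ B := by simpa using hz
        have hBconn := pendant_proj G u B A hconn (fun _ => huB) ⟨u, huB⟩
        exact Or.inr (Or.inr ⟨⟨⟨u, huB⟩, hBconn⟩, huB⟩)
  · rintro (⟨rfl, p, rfl⟩ | ⟨⟨hB, -⟩, rfl⟩ | ⟨hB, huB⟩)
    · rw [Finset.empty_disjSum, Finset.map_singleton]
      exact isSubtree_singleton _ _
    · exact pendant_connected G u B ∅ hB (Or.inr rfl)
    · exact pendant_connected G u B A hB (Or.inl huB)

end Pendant

section PendantCount

variable {V : Type*} [Fintype V] [DecidableEq V]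

/-- The disjoint-sum equivalence for finsets. -/
def finsetSumEquiv {α β : Type*} : Finset (α ⊕ β) ≃ Finset α × Finset β where
  toFun S := (S.toLeft, S.toRight)
  invFun p := p.1.disjSum p.2
  left_inv S := Finset.toLeft_disjSum_toRight
  right_inv p := by simp

lemma pendant_count (G : SimpleGraph V) (u : V) (r : ℕ) :
    (addPendants G u r).subtreeCount =
      r + Nat.card {S : Finset V // G.IsSubtree S ∧ u ∉ S}
        + 2 ^ r * Nat.card {S : Finset V // G.IsSubtree S ∧ u ∈ S} := by
  classical
  rw [SimpleGraph.subtreeCount]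
  have e1 : {S : Finset (V ⊕ Fin r) // (addPendants G u r).IsSubtree S} ≃
      {p : Finset V × Finset (Fin r) //
        ((p.1 = ∅ ∧ ∃ q, p.2 = {q}) ∨ ((G.IsSubtree p.1 ∧ u ∉ p.1) ∧ p.2 = ∅) ∨
          (G.IsSubtree p.1 ∧ u ∈ p.1))} := by
    refine (Equiv.subtypeEquiv (finsetSumEquiv) ?_)
    intro S
    conv_lhs => rw [← Finset.toLeft_disjSum_toRight (u := S)]
    exact pendant_char G u S.toLeft S.toRight
  rw [Nat.card_congr e1]
  have hdisj1 : Disjoint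
      (fun p : Finset V × Finset (Fin r) => p.1 = ∅ ∧ ∃ q, p.2 = {q})
      (fun p : Finset V × Finset (Fin r) =>
        ((G.IsSubtree p.1 ∧ u ∉ p.1) ∧ p.2 = ∅) ∨ (G.IsSubtree p.1 ∧ u ∈ p.1)) := by
    refine Pi.disjoint_iff.mpr fun p => Prop.disjoint_iff.mpr ?_
    rintro ⟨⟨h1, -⟩, (⟨⟨hs, -⟩, -⟩ | ⟨hs, -⟩)⟩ <;>
    · obtain ⟨x, hx⟩ := hs.1
      rw [h1] at hx
      exact absurd hx (Finset.notMem_empty x)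
  have hdisj2 : Disjoint
      (fun p : Finset V × Finset (Fin r) => (G.IsSubtree p.1 ∧ u ∉ p.1) ∧ p.2 = ∅)
      (fun p : Finset V × Finset (Fin r) => G.IsSubtree p.1 ∧ u ∈ p.1) := by
    refine Pi.disjoint_iff.mpr fun p => Prop.disjoint_iff.mpr ?_
    rintro ⟨⟨⟨-, h1⟩, -⟩, ⟨-, h2⟩⟩
    exact h1 h2
  rw [Nat.card_congr (subtypeOrEquiv _ _ hdisj1), Nat.card_sum,
    Nat.card_congr (subtypeOrEquiv _ _ hdisj2), Nat.card_sum]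
  have h1 : Nat.card {p : Finset V × Finset (Fin r) // p.1 = ∅ ∧ ∃ q, p.2 = {q}} = r := by
    have e : Fin r ≃ {p : Finset V × Finset (Fin r) // p.1 = ∅ ∧ ∃ q, p.2 = {q}} := by
      refine Equiv.ofBijective (fun q => ⟨(∅, {q}), rfl, q, rfl⟩) ⟨?_, ?_⟩
      · intro a b hab
        have := Subtype.ext_iff.mp hab
        have := (Prod.ext_iff.mp this).2
        simpa using this
      · rintro ⟨⟨B, A⟩, h1, q, h2⟩
        refine ⟨q, Subtype.ext ?_⟩
        simp only at h1 h2
        simp [h1, h2]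
    rw [← Nat.card_congr e, Nat.card_eq_fintype_card, Fintype.card_fin]
  have h2 : Nat.card {p : Finset V × Finset (Fin r) // (G.IsSubtree p.1 ∧ u ∉ p.1) ∧ p.2 = ∅} =
      Nat.card {S : Finset V // G.IsSubtree S ∧ u ∉ S} := by
    refine Nat.card_congr ⟨fun p => ⟨p.1.1, p.2.1⟩, fun S => ⟨(S.1, ∅), S.2, rfl⟩, ?_, ?_⟩
    · rintro ⟨⟨B, A⟩, h, hA⟩
      simp only at hA
      exact Subtype.ext (by simp [hA.symm])
    · rintro ⟨S, hS⟩; rfl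
  have h3 : Nat.card {p : Finset V × Finset (Fin r) // G.IsSubtree p.1 ∧ u ∈ p.1} =
      2 ^ r * Nat.card {S : Finset V // G.IsSubtree S ∧ u ∈ S} := by
    have e : {p : Finset V × Finset (Fin r) // G.IsSubtree p.1 ∧ u ∈ p.1} ≃
        Finset (Fin r) × {S : Finset V // G.IsSubtree S ∧ u ∈ S} :=
      ⟨fun p => (p.1.2, ⟨p.1.1, p.2⟩), fun q => ⟨(q.2.1, q.1), q.2.2⟩,
        fun p => rfl, fun q => rfl⟩
    rw [Nat.card_congr e, Nat.card_prod, Nat.card_eq_fintype_card, Fintype.card_finset,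
      Fintype.card_fin]
  rw [h1, h2, h3]
  omega

end PendantCount

section Path

lemma path5_isSubtree_iff (S : Finset (Fin 5)) :
    (pathGraph 5).IsSubtree S ↔
      (S.Nonempty ∧ ∀ a ∈ S, ∀ b ∈ S, ∀ x : Fin 5, a ≤ x → x ≤ b → x ∈ S) := by
  constructor
  · rintro ⟨hne, hconn⟩
    refine ⟨hne, ?_⟩
    have key : ∀ (p q : ((S : Finset (Fin 5)) : Set (Fin 5)))
        (w : ((pathGraph 5).induce (S : Set (Fin 5))).Walk p q) (x : Fin 5),
        ((p : Fin 5).val ≤ x.val ∧ x.val ≤ (q : Fin 5).val ∨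
          (q : Fin 5).val ≤ x.val ∧ x.val ≤ (p : Fin 5).val) → x ∈ S := by
      intro p q w
      induction w with
      | nil =>
        rename_i a
        intro x hx
        have : x = a.1 := Fin.ext (by rcases hx with ⟨h1, h2⟩ | ⟨h1, h2⟩ <;> omega)
        exact this ▸ Finset.mem_coe.mp a.2
      | @cons a b c h w ih =>
        intro x hx
        have hadj : (pathGraph 5).Adj a.1 b.1 := by simpa using h
        rw [pathGraph_adj] at hadj
        by_cases hxa : x = a.1
        · exact hxa ▸ Finset.mem_coe.mp a.2
        · have hxa' : x.val ≠ (a.1 : Fin 5).val := fun hh => hxa (Fin.ext hh)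
          exact ih x (by omega)
    intro a ha b hb x hax hxb
    obtain ⟨w⟩ := hconn.preconnected ⟨a, Finset.mem_coe.mpr ha⟩ ⟨b, Finset.mem_coe.mpr hb⟩
    exact key _ _ w x (Or.inl ⟨hax, hxb⟩)
  · rintro ⟨hne, hint⟩
    refine ⟨hne, ?_⟩
    rw [connected_iff]
    refine ⟨?_, ⟨⟨hne.choose, Finset.mem_coe.mpr hne.choose_spec⟩⟩⟩
    have key : ∀ (k : ℕ) (p q : ((S : Finset (Fin 5)) : Set (Fin 5))),
        (q : Fin 5).val = (p : Fin 5).val + k →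
        ((pathGraph 5).induce (S : Set (Fin 5))).Reachable p q := by
      intro k
      induction k with
      | zero =>
        intro p q hpq
        have : p = q := Subtype.ext (Fin.ext (by omega))
        exact this ▸ Reachable.refl _
      | succ k ih =>
        intro p q hpq
        have hq5 : (q : Fin 5).val < 5 := (q : Fin 5).isLt
        have hlt : (p : Fin 5).val + 1 < 5 := by omega
        set p' : Fin 5 := ⟨(p : Fin 5).val + 1, hlt⟩ with hp'
        have hp'S : p' ∈ S := hint _ (Finset.mem_coe.mp p.2) _ (Finset.mem_coe.mp q.2) p'
          (by rw [Fin.le_def]; simp [hp']) (by rw [Fin.le_def]; show (p : Fin 5).val + 1 ≤ (q : Fin 5).val; omega)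
        have hadj : ((pathGraph 5).induce (S : Set (Fin 5))).Adj p ⟨p', Finset.mem_coe.mpr hp'S⟩ := by
          show (pathGraph 5).Adj _ _
          rw [pathGraph_adj]
          exact Or.inl rfl
        exact (Adj.reachable hadj).trans (ih _ _ (by simp [hp']; omega))
    intro p q
    rcases le_total (p : Fin 5).val (q : Fin 5).val with h | h
    · exact key ((q : Fin 5).val - (p : Fin 5).val) p q (by omega)
    · exact (key ((p : Fin 5).val - (q : Fin 5).val) q p (by omega)).symm

lemma path5_count_mem :
    Nat.card {S : Finset (Fin 5) // (pathGraph 5).IsSubtree S ∧ (⟨2, by omega⟩ : Fin 5) ∈ S} =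
      9 := by
  rw [Nat.card_congr (Equiv.subtypeEquivRight (fun S =>
    and_congr_left' (path5_isSubtree_iff S))), Nat.card_eq_fintype_card]
  decide

lemma path5_count_not_mem :
    Nat.card {S : Finset (Fin 5) // (pathGraph 5).IsSubtree S ∧ (⟨2, by omega⟩ : Fin 5) ∉ S} =
      6 := by
  rw [Nat.card_congr (Equiv.subtypeEquivRight (fun S =>
    and_congr_left' (path5_isSubtree_iff S))), Nat.card_eq_fintype_card]
  decide

end Path

/-- Counting subtrees of `B_{n,d}` (the star `K_{1,n-d-1}` with `d` pendant vertices
attached to one of its leaves) and of `T(n,4)` (the path `v_1 … v_5` with `n - 5`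
pendant vertices attached to `v_3`): for `d ≥ 1` and `n ≥ 2d + 2`,
`χ(B_{n,d}) = n - 2 + 2^d + 2^(n-d-2) + 2^(n-2)`, and for `n ≥ 5`,
`χ(T(n,4)) = n + 1 + 2^(n-2) + 2^(n-5)`. -/
theorem subtreeCount_Bnd_and_Tn4 (n d : ℕ) (hd : 1 ≤ d) (hn : 2 * d + 2 ≤ n) :
    (addPendants (_root_.starGraph (⟨0, by omega⟩ : Fin (n - d))) ⟨1, by omega⟩ d).subtreeCount =
        n - 2 + 2 ^ d + 2 ^ (n - d - 2) + 2 ^ (n - 2) ∧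
      (5 ≤ n →
        (addPendants (pathGraph 5) ⟨2, by omega⟩ (n - 5)).subtreeCount =
          n + 1 + 2 ^ (n - 2) + 2 ^ (n - 5)) := by
  constructor
  · have hcu : (⟨0, by omega⟩ : Fin (n - d)) ≠ ⟨1, by omega⟩ := by
      simp [Fin.ext_iff]
    rw [pendant_count, star_count_not_mem _ _ hcu, star_count_mem _ _ hcu, Fintype.card_fin]
    have hmul : (2 : ℕ) ^ d * (1 + 2 ^ (n - d - 2)) = 2 ^ d + 2 ^ (n - 2) := by
      rw [mul_add, mul_one, ← pow_add]
      have : d + (n - d - 2) = n - 2 := by omega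
      rw [this]
    rw [hmul]
    generalize (2 : ℕ) ^ (n - d - 2) = b
    generalize (2 : ℕ) ^ d = a
    generalize (2 : ℕ) ^ (n - 2) = e
    omega
  · intro h5
    rw [pendant_count, path5_count_not_mem, path5_count_mem]
    have h8 : (2 : ℕ) ^ (n - 2) = 2 ^ (n - 5) * 8 := by
      have : n - 2 = (n - 5) + 3 := by omega
      rw [this, pow_add]
      norm_num
    rw [h8]
    generalize (2 : ℕ) ^ (n - 5) = a
    omega
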